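/- arXiv:2211.07323 — 2 statements merged into one kernel-verified Lean document; each statement's English description precedes it below -/
import Mathlib

section
/- Let W = W(Γ) be the right-angled Coxeter group of a simple graph Γ with word length ℓ. Let r ∈ W be a clique word, let u ∈ W satisfy ℓ(u) = ℓ(u·r) + ℓ(r), and let v, w ∈ W satisfy ℓ(v·u·w) = ℓ(v) + ℓ(u) + ℓ(w). Then ℓ(v·u·r) + ℓ(r·w) = ℓ(v·u·w); in particular ℓ(v·u·r) = ℓ(v) + ℓ(u) − ℓ(r) and ℓ(r·w) = ℓ(r) + ℓ(w). (Note that a clique word r satisfies r = r⁻¹.) -/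
namespace RACG

variable {V : Type*} [DecidableEq V]

/-- The right-angled Coxeter matrix of a simple graph `G`: diagonal entries are `1`,
entries at adjacent pairs are `2` (the generators commute), and entries at distinct
non-adjacent pairs are `0` (representing `∞`, i.e. no relation). -/
def racgMatrix (G : SimpleGraph V) [DecidableRel G.Adj] : CoxeterMatrix V where
  M a b := if a = b then 1 else if G.Adj a b then 2 else 0
  isSymm := by
    refine Matrix.ext fun a b => ?_
    show (if b = a then 1 else if G.Adj b a then 2 else 0) = (if a = b then 1 else if G.Adj a b then 2 else 0)
    by_cases h : a = b
    · subst h; rfl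
    · rw [if_neg h, if_neg (Ne.symm h)]
      by_cases hadj : G.Adj a b
      · rw [if_pos hadj, if_pos hadj.symm]
      · rw [if_neg hadj, if_neg (fun h' => hadj h'.symm)]
  diagonal := fun i => by simp
  off_diagonal := fun i i' h => by
    show (if i = i' then 1 else if G.Adj i i' then 2 else 0) ≠ 1
    rw [if_neg h]
    by_cases hadj : G.Adj i i' <;> simp [hadj]

variable {G : SimpleGraph V} [DecidableRel G.Adj] {W : Type*} [Group W]

/-- In the right-angled Coxeter group of `G`, the simple reflections at adjacent
vertices commute. -/
theorem simple_commute_of_adj (cs : CoxeterSystem (racgMatrix G) W) {a b : V}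
    (h : G.Adj a b) : Commute (cs.simple a) (cs.simple b) := by
  have hM : (racgMatrix G) a b = 2 := by
    simp only [racgMatrix, if_neg h.ne, if_pos h]
  have h2 := cs.simple_mul_simple_pow a b
  rw [hM, pow_two] at h2
  have h3 := mul_eq_one_iff_eq_inv.mp h2
  rwa [mul_inv_rev, cs.inv_simple, cs.inv_simple] at h3

/-- The clique word associated to a finite set `C` of pairwise adjacent vertices:
the product of the simple reflections at the vertices of `C` (in any order; these
commute). If `C` is not a clique, we set the value to `1` by convention. -/
noncomputable def cliqueWord (cs : CoxeterSystem (racgMatrix G) W) (C : Finset V) : W :=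
  if h : (C : Set V).Pairwise G.Adj then
    C.noncommProd (fun v => cs.simple v)
      (fun _ ha _ hb hab => simple_commute_of_adj cs (h ha hb hab))
  else 1

/-- `w` is a clique word if it is the product of the simple reflections over a finite
set of pairwise adjacent vertices. -/
def IsCliqueWord (cs : CoxeterSystem (racgMatrix G) W) (w : W) : Prop :=
  ∃ C : Finset V, (C : Set V).Pairwise G.Adj ∧ w = cliqueWord cs C

end RACG

theorem cliqueWord_mul_self
    {V : Type*} [DecidableEq V] {G : SimpleGraph V} [DecidableRel G.Adj]
    {W : Type*} [Group W] (cs : CoxeterSystem (RACG.racgMatrix G) W)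
    (C : Finset V) (hC : (C : Set V).Pairwise G.Adj) :
    RACG.cliqueWord cs C * RACG.cliqueWord cs C = 1 := by
  rw [RACG.cliqueWord, dif_pos hC]
  have comm : (C : Set V).Pairwise (Function.onFun Commute fun v => cs.simple v) :=
    fun a ha b hb hab => RACG.simple_commute_of_adj cs (hC ha hb hab)
  rw [← Finset.noncommProd_mul_distrib _ _ comm comm
    (fun a ha b hb hab => RACG.simple_commute_of_adj cs (hC ha hb hab))]
  rw [Finset.noncommProd_congr rfl
    (g := fun _ => (1 : W))
    (fun x _ => by simp [Pi.mul_apply, cs.simple_mul_simple_self]) _]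
  exact (Finset.noncommProd_eq_pow_card _ _ _ 1 fun _ _ => rfl).trans (one_pow _)

theorem length_split_at_clique
    {V : Type*} [DecidableEq V] (G : SimpleGraph V) [DecidableRel G.Adj]
    {W : Type*} [Group W] (cs : CoxeterSystem (RACG.racgMatrix G) W)
    (C : Finset V) (hC : (C : Set V).Pairwise G.Adj)
    (r : W) (hr : r = RACG.cliqueWord cs C)
    (u v w : W)
    (hu : cs.length u = cs.length (u * r) + cs.length r)
    (hvw : cs.length (v * u * w) = cs.length v + cs.length u + cs.length w) :
    cs.length (v * u * r) + cs.length (r * w) = cs.length (v * u * w) ∧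
      cs.length (v * u * r) = cs.length v + cs.length u - cs.length r ∧
      cs.length (r * w) = cs.length r + cs.length w := by
  have hrr : r * r = 1 := by rw [hr]; exact cliqueWord_mul_self cs C hC
  have h1 : cs.length (v * u * r) ≤ cs.length v + cs.length (u * r) := by
    rw [mul_assoc]; exact cs.length_mul_le v (u * r)
  have h2 : cs.length (r * w) ≤ cs.length r + cs.length w := cs.length_mul_le r w
  have h3 : cs.length (v * u * w) ≤ cs.length (v * u * r) + cs.length (r * w) := by
    have : (v * u * r) * (r * w) = v * u * w := by
      rw [mul_assoc (v*u) r (r*w), ← mul_assoc r r w, hrr, one_mul]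
    calc cs.length (v * u * w) = cs.length ((v * u * r) * (r * w)) := by rw [this]
      _ ≤ _ := cs.length_mul_le _ _
  omega
end

section
/- Let W = W(Γ) be the right-angled Coxeter group of a simple graph Γ with word length ℓ, and let w ∈ W. If ρ = (n_l, n_r, u_l, u_r, t) and ρ' = (n_l', n_r', u_l', u_r', t') are tuples with n_l, n_r, n_l', n_r' ∈ ℕ, (u_l, u_r, t) ∈ T and (u_l', u_r', t') ∈ T, and if some triple (w₁, w₂, w₃) lies in both S_w(ρ) and S_w(ρ'), then ρ = ρ'. In particular the sets S_w(ρ) are pairwise disjoint. -/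
namespace RACG

variable {V : Type*} [DecidableEq V]

variable {G : SimpleGraph V} [DecidableRel G.Adj] {W : Type*} [Group W]

variable (cs : CoxeterSystem (racgMatrix G) W)

/-- The set `W̃ₙᴿ(u)` of elements `w` of length `n` such that `w·u` is reduced and
`w·u` has the same right descents as `u`. -/
def WtildeR (n : ℕ) (u : W) : Set W :=
  {w | cs.length w = n ∧ cs.length (w * u) = cs.length w + cs.length u ∧
    ∀ v : V, (cs.IsRightDescent (w * u) v ↔ cs.IsRightDescent u v)}

/-- Membership in the set `T` of triples `(u_l, u_r, t)` such that `u_l·t` and `t·u_r`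
are clique words and `u_l·t·u_r` is reduced. -/
def MemT (ul ur t : W) : Prop :=
  IsCliqueWord cs (ul * t) ∧ IsCliqueWord cs (t * ur) ∧
    cs.length (ul * t * ur) = cs.length ul + cs.length t + cs.length ur

/-- Membership in the set `S_w` of triples `(w₁, w₂, w₃)` with `w₁·w₂·w₃ = w` a reduced
expression and `w₂` a clique word. -/
def MemS (w w₁ w₂ w₃ : W) : Prop :=
  w₁ * w₂ * w₃ = w ∧ cs.length w = cs.length w₁ + cs.length w₂ + cs.length w₃ ∧
    IsCliqueWord cs w₂

/-- Membership in the set `S_w(ρ)` for the tuple `ρ = (n_l, n_r, u_l, u_r, t)`. -/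
def MemSRho (w : W) (nl nr : ℕ) (ul ur t : W) (w₁ w₂ w₃ : W) : Prop :=
  MemS cs w w₁ w₂ w₃ ∧ w₂ = t ∧
    ∃ vl ∈ WtildeR cs nl (ul * t), ∃ vr ∈ WtildeR cs nr (ur * t),
      w₁ = vl * ul ∧ w₃ = ur⁻¹ * vr⁻¹


end RACG
namespace RACGAux
open RACG

open Multiplicative

variable {V : Type*} [DecidableEq V] {G : SimpleGraph V} [DecidableRel G.Adj]
  {W : Type*} [Group W]

noncomputable def phi (cs : CoxeterSystem (RACG.racgMatrix G) W) :
    W →* Multiplicative (V →₀ ZMod 2) :=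
  cs.lift ⟨fun v => ofAdd (Finsupp.single v 1), by
    intro i i'
    have hsq : ∀ g : Multiplicative (V →₀ ZMod 2), g ^ 2 = 1 := by
      intro g
      have : g.toAdd + g.toAdd = 0 := by
        ext v; exact CharTwo.add_self_eq_zero _
      calc g ^ 2 = ofAdd (g.toAdd + g.toAdd) := by
            rw [pow_two, ofAdd_add, ofAdd_toAdd]
        _ = 1 := by rw [this, ofAdd_zero]
    show (_ * _) ^ (RACG.racgMatrix G) i i' = 1
    by_cases h : i = i'
    · subst h
      have h1 : (RACG.racgMatrix G) i i = 1 := if_pos rfl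
      rw [h1, pow_one, ← ofAdd_add]
      have : Finsupp.single i (1 : ZMod 2) + Finsupp.single i 1 = 0 := by
        ext v; exact CharTwo.add_self_eq_zero _
      rw [this, ofAdd_zero]
    · by_cases hadj : G.Adj i i'
      · have h2 : (RACG.racgMatrix G) i i' = 2 := by
          show (if i = i' then 1 else if G.Adj i i' then 2 else 0) = 2
          rw [if_neg h, if_pos hadj]
        rw [h2]; exact hsq _
      · have h0 : (RACG.racgMatrix G) i i' = 0 := by
          show (if i = i' then 1 else if G.Adj i i' then 2 else 0) = 0
          rw [if_neg h, if_neg hadj]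
        rw [h0, pow_zero]⟩

variable (cs : CoxeterSystem (RACG.racgMatrix G) W)

theorem phi_simple (v : V) : phi cs (cs.simple v) = ofAdd (Finsupp.single v 1) :=
  cs.lift_apply_simple _ v

theorem toAdd_phi_wordProd (ω : List V) (v : V) :
    (phi cs (cs.wordProd ω)).toAdd v = ((ω.count v : ℕ) : ZMod 2) := by
  induction ω with
  | nil => simp [CoxeterSystem.wordProd_nil]
  | cons a l ih =>
    rw [cs.wordProd_cons, map_mul, toAdd_mul, Finsupp.add_apply, phi_simple, toAdd_ofAdd,
      List.count_cons, ih]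
    rcases eq_or_ne v a with rfl | hva
    · simp [Finsupp.single_apply]; ring
    · simp [Finsupp.single_apply, Ne.symm hva, hva]

theorem card_support_le_length (w : W) :
    ((phi cs w).toAdd).support.card ≤ cs.length w := by
  obtain ⟨ω, hlen, rfl⟩ := cs.exists_reduced_word w
  rw [hlen]
  clear hlen
  induction ω with
  | nil => simp [CoxeterSystem.wordProd_nil]
  | cons a l ih =>
    rw [cs.wordProd_cons, map_mul, toAdd_mul]
    calc ((Multiplicative.toAdd (phi cs (cs.simple a)) + (phi cs (cs.wordProd l)).toAdd)).support.card
        ≤ (insert a ((phi cs (cs.wordProd l)).toAdd).support).card := by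
          apply Finset.card_le_card
          refine Finsupp.support_add.trans ?_
          rw [Finset.insert_eq]
          apply Finset.union_subset_union _ le_rfl
          rw [phi_simple, toAdd_ofAdd]
          exact Finsupp.support_single_subset
      _ ≤ ((phi cs (cs.wordProd l)).toAdd).support.card + 1 := Finset.card_insert_le _ _
      _ ≤ l.length + 1 := by omega
      _ = (a :: l).length := by simp

theorem cliqueWord_eq_wordProd {C : Finset V} (hC : (C : Set V).Pairwise G.Adj)
    {ω : List V} (hnd : ω.Nodup) (hω : ω.toFinset = C) :
    cliqueWord cs C = cs.wordProd ω := by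
  rw [cliqueWord, dif_pos hC]
  subst hω
  refine (Finset.noncommProd_toFinset _ _ _ hnd).trans ?_
  rfl

theorem length_cliqueWord_le {C : Finset V} (hC : (C : Set V).Pairwise G.Adj) :
    cs.length (cliqueWord cs C) ≤ C.card := by
  rw [cliqueWord_eq_wordProd cs hC C.nodup_toList C.toList_toFinset]
  calc cs.length (cs.wordProd C.toList) ≤ C.toList.length := cs.length_wordProd_le _
    _ = C.card := Finset.length_toList C

theorem toAdd_phi_cliqueWord {C : Finset V} (hC : (C : Set V).Pairwise G.Adj) (v : V) :
    (phi cs (cliqueWord cs C)).toAdd v = if v ∈ C then 1 else 0 := by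
  rw [cliqueWord_eq_wordProd cs hC C.nodup_toList C.toList_toFinset, toAdd_phi_wordProd]
  by_cases hv : v ∈ C
  · have h1 : C.toList.count v = 1 :=
      List.count_eq_one_of_mem C.nodup_toList (Finset.mem_toList.2 hv)
    rw [h1, if_pos hv]; norm_num
  · have h0 : C.toList.count v = 0 :=
      List.count_eq_zero.2 (fun hmem => hv (Finset.mem_toList.1 hmem))
    rw [h0, if_neg hv]; norm_num

theorem support_toAdd_phi_cliqueWord {C : Finset V} (hC : (C : Set V).Pairwise G.Adj) :
    ((phi cs (cliqueWord cs C)).toAdd).support = C := by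
  ext v
  rw [Finsupp.mem_support_iff, toAdd_phi_cliqueWord cs hC]
  by_cases hv : v ∈ C <;> simp [hv]

theorem length_cliqueWord {C : Finset V} (hC : (C : Set V).Pairwise G.Adj) :
    cs.length (cliqueWord cs C) = C.card := by
  refine le_antisymm (length_cliqueWord_le cs hC) ?_
  have h := card_support_le_length cs (cliqueWord cs C)
  rwa [support_toAdd_phi_cliqueWord cs hC] at h

theorem cliqueWord_inj {C C' : Finset V} (hC : (C : Set V).Pairwise G.Adj)
    (hC' : (C' : Set V).Pairwise G.Adj) (h : cliqueWord cs C = cliqueWord cs C') : C = C' := by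
  rw [← support_toAdd_phi_cliqueWord cs hC, ← support_toAdd_phi_cliqueWord cs hC', h]

theorem isRightDescent_cliqueWord {C : Finset V} (hC : (C : Set V).Pairwise G.Adj) (v : V) :
    cs.IsRightDescent (cliqueWord cs C) v ↔ v ∈ C := by
  constructor
  · intro hd
    by_contra hv
    have hsupp : ((phi cs (cliqueWord cs C * cs.simple v)).toAdd).support = insert v C := by
      ext u
      rw [Finsupp.mem_support_iff, map_mul, toAdd_mul, Finsupp.add_apply,
        toAdd_phi_cliqueWord cs hC, phi_simple, toAdd_ofAdd, Finsupp.single_apply,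
        Finset.mem_insert]
      rcases eq_or_ne v u with rfl | huv
      · simp [hv]
      · by_cases hu : u ∈ C <;> simp [hu, huv, Ne.symm huv]
    have hge : C.card + 1 ≤ cs.length (cliqueWord cs C * cs.simple v) := by
      have h1 := card_support_le_length cs (cliqueWord cs C * cs.simple v)
      rwa [hsupp, Finset.card_insert_of_notMem hv] at h1
    rw [CoxeterSystem.IsRightDescent, length_cliqueWord cs hC] at hd
    omega
  · intro hv
    have herase : ((C.erase v : Finset V) : Set V).Pairwise G.Adj :=
      hC.mono (Finset.coe_subset.2 (Finset.erase_subset _ _))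
    have hkey : cliqueWord cs C * cs.simple v = cliqueWord cs (C.erase v) := by
      have h1 : cliqueWord cs (C.erase v) * cs.simple v = cliqueWord cs C := by
        rw [cliqueWord, cliqueWord, dif_pos hC, dif_pos herase]
        exact Finset.noncommProd_erase_mul C hv _ _
      rw [← h1, mul_assoc, cs.simple_mul_simple_self, mul_one]
    rw [CoxeterSystem.IsRightDescent, hkey, length_cliqueWord cs hC,
      length_cliqueWord cs herase, Finset.card_erase_of_mem hv]
    have hpos : 0 < C.card := Finset.card_pos.2 ⟨v, hv⟩
    omega

theorem commute_of_mul_eq_cliqueWord {C : Finset V} (hC : (C : Set V).Pairwise G.Adj)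
    {a b : W} (hab : a * b = cliqueWord cs C)
    (hl : cs.length (a * b) = cs.length a + cs.length b) : Commute a b := by
  obtain ⟨α, hαlen, hαa⟩ := cs.exists_reduced_word a
  obtain ⟨β, hβlen, hβb⟩ := cs.exists_reduced_word b
  set ω := α ++ β with hωdef
  have hπ : cs.wordProd ω = cliqueWord cs C := by
    rw [hωdef, cs.wordProd_append, ← hαa, ← hβb, hab]
  have hlen : ω.length = C.card := by
    have hcc := length_cliqueWord cs hC
    rw [hωdef, List.length_append, ← hαlen, ← hβlen, ← hαa, ← hβb, ← hl, hab, hcc]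
  have hcnt : ∀ v : V, ((ω.count v : ℕ) : ZMod 2) = if v ∈ C then 1 else 0 := by
    intro v
    rw [← toAdd_phi_wordProd cs ω v, hπ, toAdd_phi_cliqueWord cs hC]
  have hmemC : ∀ v ∈ C, 1 ≤ ω.count v := by
    intro v hv
    rcases Nat.eq_zero_or_pos (ω.count v) with h0 | h1
    · exfalso
      have hv1 := hcnt v
      rw [h0, Nat.cast_zero, if_pos hv] at hv1
      exact zero_ne_one hv1
    · exact h1
  have hsub : C ⊆ ω.toFinset := fun v hv =>
    List.mem_toFinset.2 (List.count_pos_iff.1 (hmemC v hv))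
  have htot : ∑ v ∈ ω.toFinset, ω.count v = ω.length := by
    set_option linter.unnecessarySimpa false in
    simpa using Multiset.toFinset_sum_count_eq (↑ω : Multiset V)
  have hcard : ω.toFinset.card ≤ ω.length := by
    calc ω.toFinset.card = ∑ v ∈ ω.toFinset, 1 := by simp
      _ ≤ ∑ v ∈ ω.toFinset, ω.count v :=
          Finset.sum_le_sum (fun v hv => List.count_pos_iff.2 (List.mem_toFinset.1 hv))
      _ = ω.length := htot
  have hCeq : ω.toFinset = C :=
    (Finset.eq_of_subset_of_card_le hsub (by omega)).symm
  have hcount1 : ∀ v ∈ ω.toFinset, ω.count v = 1 := by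
    by_contra hcon
    push_neg at hcon
    obtain ⟨v0, hv0, hne⟩ := hcon
    have hp0 : 0 < ω.count v0 := List.count_pos_iff.2 (List.mem_toFinset.1 hv0)
    have hlt : ω.length < ∑ v ∈ ω.toFinset, ω.count v := by
      calc ω.length = C.card := hlen
        _ = ∑ v ∈ ω.toFinset, 1 := by rw [← hCeq]; simp
        _ < ∑ v ∈ ω.toFinset, ω.count v :=
            Finset.sum_lt_sum (fun v hv => List.count_pos_iff.2 (List.mem_toFinset.1 hv))
              ⟨v0, hv0, by omega⟩
    omega
  have hnd : ω.Nodup := by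
    rw [List.nodup_iff_count_le_one]
    intro v
    by_cases hv : v ∈ ω.toFinset
    · rw [hcount1 v hv]
    · have : ω.count v = 0 := List.count_eq_zero.2 (fun hm => hv (List.mem_toFinset.2 hm))
      omega
  have hdisj : List.Disjoint α β := fun x hx hy => ((List.nodup_append).1 (hωdef ▸ hnd)).2.2 x hx x hy rfl
  rw [hαa, hβb]
  show Commute ((α.map cs.simple).prod) ((β.map cs.simple).prod)
  apply Commute.list_prod_right
  intro x hx
  apply Commute.list_prod_left
  intro y hy
  obtain ⟨u, hu, rfl⟩ := List.mem_map.1 hy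
  obtain ⟨v', hv', rfl⟩ := List.mem_map.1 hx
  have huC : u ∈ C := by
    rw [← hCeq]
    exact List.mem_toFinset.2 (List.mem_append_left _ hu)
  have hv'C : v' ∈ C := by
    rw [← hCeq]
    exact List.mem_toFinset.2 (List.mem_append_right _ hv')
  have hne : u ≠ v' := fun he => hdisj hu (he ▸ hv')
  exact simple_commute_of_adj cs (hC huC hv'C hne)

end RACGAux


theorem SRho_disjoint
    {V : Type*} [DecidableEq V] (G : SimpleGraph V) [DecidableRel G.Adj]
    {W : Type*} [Group W] (cs : CoxeterSystem (RACG.racgMatrix G) W)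
    (w : W) (nl nr nl' nr' : ℕ) (ul ur t ul' ur' t' : W)
    (hT : RACG.MemT cs ul ur t) (hT' : RACG.MemT cs ul' ur' t')
    (w₁ w₂ w₃ : W)
    (h : RACG.MemSRho cs w nl nr ul ur t w₁ w₂ w₃)
    (h' : RACG.MemSRho cs w nl' nr' ul' ur' t' w₁ w₂ w₃) :
    nl = nl' ∧ nr = nr' ∧ ul = ul' ∧ ur = ur' ∧ t = t' := by
  obtain ⟨hS, hw2, vl, hvl, vr, hvr, hw1, hw3⟩ := h
  obtain ⟨hS', hw2', vl', hvl', vr', hvr', hw1', hw3'⟩ := h'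
  have htt : t = t' := hw2.symm.trans hw2'
  subst htt
  -- left side
  obtain ⟨C, hCcl, hCeq⟩ := hT.1
  obtain ⟨C', hC'cl, hC'eq⟩ := hT'.1
  have e1 : vl * (ul * t) = w₁ * t := by rw [hw1]; group
  have e1' : vl' * (ul' * t) = w₁ * t := by rw [hw1']; group
  have hdl : ∀ v : V, cs.IsRightDescent (ul * t) v ↔ cs.IsRightDescent (ul' * t) v := by
    intro v
    rw [← hvl.2.2 v, ← hvl'.2.2 v, e1, e1']
  have hCC' : C = C' := by
    apply Finset.ext
    intro v
    rw [← RACGAux.isRightDescent_cliqueWord cs hCcl v,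
      ← RACGAux.isRightDescent_cliqueWord cs hC'cl v, ← hCeq, ← hC'eq]
    exact hdl v
  have hul : ul = ul' := by
    have : ul * t = ul' * t := by rw [hCeq, hC'eq, hCC']
    exact mul_right_cancel this
  subst hul
  have hvlvl' : vl = vl' := by
    have : vl * ul = vl' * ul := hw1.symm.trans hw1'
    exact mul_right_cancel this
  have hnl : nl = nl' := by rw [← hvl.1, ← hvl'.1, hvlvl']
  -- right side
  obtain ⟨D, hDcl, hDeq⟩ := hT.2.1
  obtain ⟨D', hD'cl, hD'eq⟩ := hT'.2.1
  have hred : cs.length (t * ur) = cs.length t + cs.length ur := by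
    have h1 := cs.length_mul_le ul (t * ur)
    have h2 := cs.length_mul_le t ur
    rw [← mul_assoc] at h1
    have h3 := hT.2.2
    omega
  have hred' : cs.length (t * ur') = cs.length t + cs.length ur' := by
    have h1 := cs.length_mul_le ul (t * ur')
    have h2 := cs.length_mul_le t ur'
    rw [← mul_assoc] at h1
    have h3 := hT'.2.2
    omega
  have hcomm : Commute t ur := RACGAux.commute_of_mul_eq_cliqueWord cs hDcl hDeq hred
  have hcomm' : Commute t ur' := RACGAux.commute_of_mul_eq_cliqueWord cs hD'cl hD'eq hred'
  have hurt : ur * t = RACG.cliqueWord cs D := by rw [← hcomm.eq, hDeq]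
  have hurt' : ur' * t = RACG.cliqueWord cs D' := by rw [← hcomm'.eq, hD'eq]
  have e2 : vr * (ur * t) = w₃⁻¹ * t := by rw [hw3]; group
  have e2' : vr' * (ur' * t) = w₃⁻¹ * t := by rw [hw3']; group
  have hdr : ∀ v : V, cs.IsRightDescent (ur * t) v ↔ cs.IsRightDescent (ur' * t) v := by
    intro v
    rw [← hvr.2.2 v, ← hvr'.2.2 v, e2, e2']
  have hDD' : D = D' := by
    apply Finset.ext
    intro v
    rw [← RACGAux.isRightDescent_cliqueWord cs hDcl v,
      ← RACGAux.isRightDescent_cliqueWord cs hD'cl v, ← hurt, ← hurt']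
    exact hdr v
  have hur : ur = ur' := by
    have : ur * t = ur' * t := by rw [hurt, hurt', hDD']
    exact mul_right_cancel this
  subst hur
  have hvrvr' : vr = vr' := by
    have h4 : ur⁻¹ * vr⁻¹ = ur⁻¹ * vr'⁻¹ := hw3.symm.trans hw3'
    have h5 : vr⁻¹ = vr'⁻¹ := mul_left_cancel h4
    exact inv_injective h5
  have hnr : nr = nr' := by rw [← hvr.1, ← hvr'.1, hvrvr']
  exact ⟨hnl, hnr, rfl, rfl, rfl⟩
end
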